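/- Let B be a fractional Brownian motion with Hurst index H ∈ (0,1) on [0,1]. Fix δ ∈ (0,H) and constants ν, ν* > 0, set ρ = 2(ν + ν*), ℓ_k = 2^{-(H-δ)k}, and K(ν) = sup{n ≥ 1 : 4√n > ν·2^{δn}} (a finite natural number). Then for every integer k > K(ν), P( max_{0 ≤ j ≤ 2^{k-1}-1} |a^k_j − b^k_j| ≥ ρ·ℓ_k ) ≤ 2·exp(−(ν*)²·2^{2kδ−2}). -/

import Mathlib

open MeasureTheory ProbabilityTheory Filter

noncomputable section

/-- Covariance function of fractional Brownian motion with Hurst index `H`: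
`r(s,t) = (s^{2H} + t^{2H} − |s−t|^{2H})/2`. -/
def fbmCov (H s t : ℝ) : ℝ := (s ^ (2 * H) + t ^ (2 * H) - |s - t| ^ (2 * H)) / 2

/-- `B` is a fractional Brownian motion with Hurst index `H` on `[0,1]` under `P`:
continuous sample paths, `B 0 = 0`, and all finite-dimensional marginals are centered
Gaussian with covariance `fbmCov H` (expressed via one-dimensional laws of all linear
combinations). -/
structure IsFBM {Ω : Type*} [MeasurableSpace Ω] (P : Measure Ω) (H : ℝ)
    (B : Ω → ℝ → ℝ) : Prop where
  continuousOn : ∀ ω, ContinuousOn (B ω) (Set.Icc 0 1)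
  init : ∀ ω, B ω 0 = 0
  measurable : ∀ t : ℝ, Measurable fun ω => B ω t
  gaussian : ∀ (m : ℕ) (t : Fin m → ℝ), (∀ i, t i ∈ Set.Icc (0:ℝ) 1) →
    ∀ c : Fin m → ℝ,
      Measure.map (fun ω => ∑ i, c i * B ω (t i)) P =
        gaussianReal 0 (∑ i, ∑ j, c i * c j * fbmCov H (t i) (t j)).toNNReal

/-- `max_{0 ≤ j ≤ 2^{k-1}-1} |a^k_j − b^k_j|` where `a^k_j = B((2j+1)·2^{−k})` and
`b^k_j = (B(j·2^{−(k−1)}) + B((j+1)·2^{−(k−1)}))/2`. -/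
def mdGap (B : ℝ → ℝ) (k : ℕ) : ℝ :=
  (Finset.range (2 ^ (k - 1))).sup' (Finset.nonempty_range_iff.mpr (by positivity))
    fun j => |B ((2 * (j:ℝ) + 1) / 2 ^ k) -
      (B ((j:ℝ) / 2 ^ (k - 1)) + B (((j:ℝ) + 1) / 2 ^ (k - 1))) / 2|

/-- `K(ν) = sup {n ≥ 1 : 4√n > ν·2^{δn}}`. -/
def KofNu (ν δ : ℝ) : ℕ :=
  sSup {n : ℕ | 1 ≤ n ∧ ν * (2:ℝ) ^ (δ * (n:ℝ)) < 4 * Real.sqrt n}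


namespace FBMaux

open Real NNReal ENNReal

lemma integral_exp_mul_gaussian (v : ℝ≥0) (hv : v ≠ 0) (t : ℝ) :
    Integrable (fun x => Real.exp (t * x)) (gaussianReal 0 v) ∧
      ∫ x, Real.exp (t * x) ∂(gaussianReal 0 v) = Real.exp (t ^ 2 * v / 2) := by
  have hv0 : (0:ℝ) < v := lt_of_le_of_ne v.coe_nonneg (by exact_mod_cast hv.symm)
  have hb : (0:ℝ) < (2 * (v:ℝ))⁻¹ := by positivity
  have key : ∀ x : ℝ, Real.exp (t * x) * gaussianPDFReal 0 v x =
      ((Real.sqrt (2 * π * v))⁻¹ * Real.exp (t ^ 2 * v / 2)) *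
        Real.exp (-(2 * (v:ℝ))⁻¹ * (x - t * v) ^ 2) := by
    intro x
    have hexp : t * x + (-(x - 0) ^ 2 / (2 * (v:ℝ))) =
        t ^ 2 * v / 2 + (-(2 * (v:ℝ))⁻¹ * (x - t * v) ^ 2) := by
      field_simp
      ring
    rw [gaussianPDFReal, mul_comm (Real.exp (t*x)), mul_assoc, ← Real.exp_add, add_comm, hexp,
      Real.exp_add, ← mul_assoc]
  have hint : Integrable (fun x => Real.exp (t * x) * gaussianPDFReal 0 v x) := by
    refine Integrable.congr (((integrable_exp_neg_mul_sq hb).comp_sub_right (t*v)).const_mul ((Real.sqrt (2*π*(v:ℝ)))⁻¹ * Real.exp (t^2*v/2))) ?_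
    filter_upwards with x
    rw [key x]
  have hwd : gaussianReal 0 v =
      volume.withDensity (fun x => ((gaussianPDFReal 0 v x).toNNReal : ℝ≥0∞)) := by
    rw [gaussianReal_of_var_ne_zero _ hv, gaussianPDF_def]
    rfl
  have hmeas : Measurable fun x => (gaussianPDFReal 0 v x).toNNReal :=
    (measurable_gaussianPDFReal 0 v).real_toNNReal
  constructor
  · rw [hwd, integrable_withDensity_iff_integrable_smul hmeas]
    refine hint.congr ?_
    filter_upwards with x
    rw [NNReal.smul_def, smul_eq_mul, Real.coe_toNNReal _ (gaussianPDFReal_nonneg 0 v _), mul_comm]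
  · rw [hwd, integral_withDensity_eq_integral_smul hmeas]
    have he : ∀ x : ℝ, (gaussianPDFReal 0 v x).toNNReal • Real.exp (t * x)
        = Real.exp (t * x) * gaussianPDFReal 0 v x := by
      intro x
      rw [NNReal.smul_def, smul_eq_mul, Real.coe_toNNReal _ (gaussianPDFReal_nonneg 0 v _),
        mul_comm]
    simp_rw [he, key]
    rw [integral_const_mul,
      integral_sub_right_eq_self (fun x => Real.exp (-(2*(v:ℝ))⁻¹ * x ^ 2)) (t*(v:ℝ)),
      integral_gaussian]
    have h2 : π / (2 * (v:ℝ))⁻¹ = 2 * π * v := by field_simp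
    rw [h2]
    have hs : Real.sqrt (2 * π * v) ≠ 0 := by positivity
    field_simp

lemma gaussian_tail_one {Ω : Type*} [MeasurableSpace Ω] (P : Measure Ω) [IsProbabilityMeasure P]
    (X : Ω → ℝ) (hXm : Measurable X) (v : ℝ≥0) (hv : v ≠ 0)
    (hmap : Measure.map X P = gaussianReal 0 v) (s2 x : ℝ) (hs2 : 0 < s2)
    (hvs : (v:ℝ) ≤ s2) (hx : 0 < x) :
    P {ω | x ≤ X ω} ≤ ENNReal.ofReal (Real.exp (-x ^ 2 / (2 * s2))) := by
  set t : ℝ := x / s2 with ht_def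
  have ht : 0 ≤ t := by positivity
  have hg := integral_exp_mul_gaussian v hv t
  have hmexp : Measurable fun y : ℝ => Real.exp (t * y) :=
    (measurable_const.mul measurable_id).exp
  have hint : Integrable (fun ω => Real.exp (t * X ω)) P := by
    have := (integrable_map_measure hmexp.aestronglyMeasurable hXm.aemeasurable
      (f := X) (μ := P)).mp
    rw [hmap] at this
    exact this hg.1
  have hmgf : mgf X P t = Real.exp (t ^ 2 * v / 2) := by
    rw [mgf, ← integral_map hXm.aemeasurable hmexp.aestronglyMeasurable, hmap, hg.2]
  have hch := measure_ge_le_exp_mul_mgf (X := X) (μ := P) x ht hint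
  rw [hmgf, ← Real.exp_add] at hch
  have hexp_le : Real.exp (-t * x + t ^ 2 * v / 2) ≤ Real.exp (-x ^ 2 / (2 * s2)) := by
    apply Real.exp_le_exp.mpr
    have h1 : t ^ 2 * v / 2 ≤ t ^ 2 * s2 / 2 := by nlinarith [sq_nonneg t]
    have h2 : -t * x + t ^ 2 * s2 / 2 = -x ^ 2 / (2 * s2) := by
      rw [ht_def]
      field_simp
      ring
    linarith
  calc P {ω | x ≤ X ω} = ENNReal.ofReal (P {ω | x ≤ X ω}).toReal := by
        rw [ENNReal.ofReal_toReal (measure_ne_top P _)]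
    _ ≤ ENNReal.ofReal (Real.exp (-x ^ 2 / (2 * s2))) :=
        ENNReal.ofReal_le_ofReal (le_trans hch hexp_le)

lemma cov_combo (H u h : ℝ) (hH : 0 < H) (hh : 0 < h) :
    ∑ i, ∑ j, (![1, -(1/2), -(1/2)] : Fin 3 → ℝ) i * (![1, -(1/2), -(1/2)] : Fin 3 → ℝ) j *
      fbmCov H (![u + h, u, u + 2*h] i) (![u + h, u, u + 2*h] j)
    = h ^ (2*H) - (2*h) ^ (2*H) / 4 := by
  have h2H : (2:ℝ) * H ≠ 0 := by positivity
  have e1 : |u + h - u| = h := by rw [add_sub_cancel_left]; exact abs_of_pos hh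
  have e2 : |u - (u + h)| = h := by rw [abs_sub_comm]; exact e1
  have e3 : |u + h - (u + 2*h)| = h := by
    have : u + h - (u + 2*h) = -h := by ring
    rw [this, abs_neg]; exact abs_of_pos hh
  have e4 : |u + 2*h - (u + h)| = h := by rw [abs_sub_comm]; exact e3
  have e5 : |u - (u + 2*h)| = 2*h := by
    have : u - (u + 2*h) = -(2*h) := by ring
    rw [this, abs_neg]; exact abs_of_pos (by linarith)
  have e6 : |u + 2*h - u| = 2*h := by rw [abs_sub_comm]; exact e5
  simp only [Fin.sum_univ_three, Matrix.cons_val_zero, Matrix.cons_val_one, Matrix.head_cons,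
    Matrix.cons_val_two, Matrix.tail_cons, fbmCov, sub_self, abs_zero, Real.zero_rpow h2H,
    e1, e2, e3, e4, e5, e6]
  ring

lemma cov_combo' (H u h : ℝ) (hH : 0 < H) (hh : 0 < h) :
    ∑ i, ∑ j, (![-1, 1/2, 1/2] : Fin 3 → ℝ) i * (![-1, 1/2, 1/2] : Fin 3 → ℝ) j *
      fbmCov H (![u + h, u, u + 2*h] i) (![u + h, u, u + 2*h] j)
    = h ^ (2*H) - (2*h) ^ (2*H) / 4 := by
  rw [← cov_combo H u h hH hh]
  simp only [Fin.sum_univ_three, Matrix.cons_val_zero, Matrix.cons_val_one, Matrix.head_cons,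
    Matrix.cons_val_two, Matrix.tail_cons]
  ring

lemma K_prop (ν δ : ℝ) (hν : 0 < ν) (hδ : 0 < δ) {k : ℕ} (hk : KofNu ν δ < k) :
    4 * Real.sqrt k ≤ ν * (2:ℝ) ^ (δ * (k:ℝ)) := by
  set c : ℝ := δ * Real.log 2 with hc_def
  have hc : 0 < c := mul_pos hδ (Real.log_pos one_lt_two)
  have hrw : ∀ n : ℕ, ν * (2:ℝ) ^ (δ * (n:ℝ)) = ν * Real.exp (c * n) := by
    intro n
    rw [Real.rpow_def_of_pos two_pos]
    congr 1
    rw [hc_def]; ring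
  have T3 : Tendsto (fun n : ℕ => Real.exp (c * n) / (c * n)) atTop atTop := by
    have T1 : Tendsto (fun x : ℝ => Real.exp x / x) atTop atTop := by
      have := Real.tendsto_exp_div_pow_atTop 1
      simpa using this
    have T2 : Tendsto (fun n : ℕ => c * (n:ℝ)) atTop atTop :=
      (tendsto_natCast_atTop_atTop (R := ℝ)).const_mul_atTop hc
    exact T1.comp T2
  have hev : ∀ᶠ n : ℕ in atTop, 4 * Real.sqrt n ≤ ν * (2:ℝ) ^ (δ * (n:ℝ)) := by
    filter_upwards [T3.eventually_ge_atTop (4 / (ν * c)), eventually_ge_atTop 1] with n h1 h2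
    have hn1 : (1:ℝ) ≤ (n:ℝ) := by exact_mod_cast h2
    have hcn : 0 < c * n := by positivity
    have hsq : Real.sqrt n ≤ n := by
      calc Real.sqrt n ≤ Real.sqrt ((n:ℝ)^2) := Real.sqrt_le_sqrt (by nlinarith)
        _ = n := Real.sqrt_sq (by linarith)
    have hexp : 4 * (n:ℝ) / ν ≤ Real.exp (c * n) := by
      rw [le_div_iff₀ hcn] at h1
      have : 4 / (ν * c) * (c * n) = 4 * n / ν := by field_simp
      rw [this] at h1; exact h1
    rw [hrw]
    rw [div_le_iff₀ hν] at hexp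
    nlinarith
  obtain ⟨N, hN⟩ := eventually_atTop.mp hev
  by_contra hcon
  push_neg at hcon
  have hk1 : 1 ≤ k := by omega
  have hmem : k ∈ {n : ℕ | 1 ≤ n ∧ ν * (2:ℝ) ^ (δ * (n:ℝ)) < 4 * Real.sqrt n} :=
    ⟨hk1, hcon⟩
  have hbdd : BddAbove {n : ℕ | 1 ≤ n ∧ ν * (2:ℝ) ^ (δ * (n:ℝ)) < 4 * Real.sqrt n} := by
    refine ⟨N, fun n hn => ?_⟩
    by_contra hnN
    push_neg at hnN
    exact absurd (hN n hnN.le) (not_le.mpr hn.2)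
  have := le_csSup hbdd hmem
  exact absurd hk (not_lt.mpr this)

lemma per_j {Ω : Type*} [MeasurableSpace Ω] (P : Measure Ω) [IsProbabilityMeasure P]
    (H : ℝ) (B : Ω → ℝ → ℝ) (hB : IsFBM P H B) (hH0 : 0 < H)
    (u h : ℝ) (hh : 0 < h) (hu : 0 ≤ u) (h1 : u + 2*h ≤ 1)
    (s2 x : ℝ) (hs2 : 0 < s2)
    (hVpos : 0 < h^(2*H) - (2*h)^(2*H)/4) (hVle : h^(2*H) - (2*h)^(2*H)/4 ≤ s2)
    (hx : 0 < x) :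
    P {ω | x ≤ |B ω (u + h) - (B ω u + B ω (u + 2*h))/2|} ≤
      ENNReal.ofReal (2 * Real.exp (-x^2/(2*s2))) := by
  set V : ℝ := h^(2*H) - (2*h)^(2*H)/4 with hV_def
  set X : Ω → ℝ := fun ω => B ω (u + h) - (B ω u + B ω (u + 2*h))/2 with hX_def
  have hpts : ∀ i, (![u + h, u, u + 2*h] : Fin 3 → ℝ) i ∈ Set.Icc (0:ℝ) 1 := by
    intro i
    fin_cases i <;> constructor <;> simp <;> linarith
  have hXm : Measurable X :=
    (hB.measurable _).sub (((hB.measurable _).add (hB.measurable _)).div_const 2)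
  have hVnn : V.toNNReal ≠ 0 := by
    simp only [ne_eq, Real.toNNReal_eq_zero, not_le]
    exact hVpos
  have hVc : ((V.toNNReal : ℝ)) ≤ s2 := by
    rw [Real.coe_toNNReal _ hVpos.le]; exact hVle
  have hmap1 : Measure.map X P = gaussianReal 0 V.toNNReal := by
    have hg := hB.gaussian 3 (![u + h, u, u + 2*h]) hpts ![1, -(1/2), -(1/2)]
    rw [cov_combo H u h hH0 hh] at hg
    have hfun : (fun ω => ∑ i, (![1, -(1/2), -(1/2)] : Fin 3 → ℝ) i *
        B ω ((![u + h, u, u + 2*h] : Fin 3 → ℝ) i)) = X := by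
      funext ω
      simp only [Fin.sum_univ_three, Matrix.cons_val_zero, Matrix.cons_val_one, Matrix.head_cons,
        Matrix.cons_val_two, Matrix.tail_cons, hX_def]
      ring
    rwa [hfun] at hg
  have hmap2 : Measure.map (fun ω => -X ω) P = gaussianReal 0 V.toNNReal := by
    have hg := hB.gaussian 3 (![u + h, u, u + 2*h]) hpts ![-1, 1/2, 1/2]
    rw [cov_combo' H u h hH0 hh] at hg
    have hfun : (fun ω => ∑ i, (![-1, 1/2, 1/2] : Fin 3 → ℝ) i *
        B ω ((![u + h, u, u + 2*h] : Fin 3 → ℝ) i)) = fun ω => -X ω := by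
      funext ω
      simp only [Fin.sum_univ_three, Matrix.cons_val_zero, Matrix.cons_val_one, Matrix.head_cons,
        Matrix.cons_val_two, Matrix.tail_cons, hX_def]
      ring
    rwa [hfun] at hg
  have t1 := gaussian_tail_one P X hXm V.toNNReal hVnn hmap1 s2 x hs2 hVc hx
  have t2 := gaussian_tail_one P (fun ω => -X ω) hXm.neg V.toNNReal hVnn hmap2 s2 x hs2 hVc hx
  have hsub : {ω | x ≤ |X ω|} ⊆ {ω | x ≤ X ω} ∪ {ω | x ≤ -X ω} := by
    intro ω hω
    simp only [Set.mem_setOf_eq] at hω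
    rcases le_abs.mp hω with hc | hc
    · exact Or.inl hc
    · exact Or.inr hc
  calc P {ω | x ≤ |X ω|} ≤ P ({ω | x ≤ X ω} ∪ {ω | x ≤ -X ω}) := measure_mono hsub
    _ ≤ P {ω | x ≤ X ω} + P {ω | x ≤ -X ω} := measure_union_le _ _
    _ ≤ ENNReal.ofReal (Real.exp (-x^2/(2*s2))) + ENNReal.ofReal (Real.exp (-x^2/(2*s2))) :=
        add_le_add t1 t2
    _ = ENNReal.ofReal (2 * Real.exp (-x^2/(2*s2))) := by
        rw [← ENNReal.ofReal_add (Real.exp_nonneg _) (Real.exp_nonneg _)]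
        congr 1
        ring

end FBMaux

open FBMaux in
set_option maxHeartbeats 1000000 in
/-- Theorem 1 (tail bound for the midpoint displacement): for `k > K(ν)`,
`P(max_j |a^k_j − b^k_j| ≥ ρ·2^{−(H−δ)k}) ≤ 2·exp(−ν*²·2^{2kδ−2})` with `ρ = 2(ν+ν*)`. -/
theorem stmt0 {Ω : Type*} [MeasurableSpace Ω] (P : Measure Ω) [IsProbabilityMeasure P]
    (H δ ν ν' ρ : ℝ) (hH : H ∈ Set.Ioo (0:ℝ) 1) (hδ : δ ∈ Set.Ioo (0:ℝ) H)
    (hν : 0 < ν) (hν' : 0 < ν') (hρ : ρ = 2 * (ν + ν'))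
    (B : Ω → ℝ → ℝ) (hB : IsFBM P H B) (k : ℕ) (hk : KofNu ν δ < k) :
    P {ω | ρ * (2:ℝ) ^ (-(H - δ) * (k:ℝ)) ≤ mdGap (B ω) k} ≤
      ENNReal.ofReal (2 * Real.exp (-ν' ^ 2 * (2:ℝ) ^ (2 * (k:ℝ) * δ - 2))) := by
  obtain ⟨hH0, hH1⟩ := hH
  obtain ⟨hδ0, hδH⟩ := hδ
  have hKP := K_prop ν δ hν hδ0 hk
  obtain ⟨m, rfl⟩ : ∃ m, k = m + 1 := ⟨k - 1, by omega⟩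
  set n : ℝ := ((m + 1 : ℕ) : ℝ) with hn_def
  have hn1 : (1:ℝ) ≤ n := by rw [hn_def]; exact_mod_cast Nat.one_le_iff_ne_zero.mpr (by omega)
  set x : ℝ := ρ * (2:ℝ) ^ (-(H - δ) * n) with hx_def
  have hρ0 : (0:ℝ) < ρ := by rw [hρ]; linarith
  have hx0 : 0 < x := by
    rw [hx_def]; exact mul_pos hρ0 (Real.rpow_pos_of_pos two_pos _)
  set h : ℝ := ((2:ℝ) ^ (m+1))⁻¹ with hh_def
  have hh : 0 < h := by rw [hh_def]; positivity
  set s2 : ℝ := (2:ℝ) ^ (-(2*H) * n) with hs2_def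
  have hs2 : 0 < s2 := Real.rpow_pos_of_pos two_pos _
  -- variance bounds
  have h2H4 : (2:ℝ) ^ (2*H) < 4 := by
    have hlt : (2:ℝ) ^ (2*H) < (2:ℝ) ^ (2:ℝ) :=
      Real.rpow_lt_rpow_of_exponent_lt one_lt_two (by linarith)
    have h22 : (2:ℝ) ^ (2:ℝ) = 4 := by
      have := Real.rpow_natCast (2:ℝ) 2
      norm_num at this
      linarith [this]
    linarith [h22 ▸ hlt]
  have hmulr : (2*h) ^ (2*H) = (2:ℝ)^(2*H) * h^(2*H) := Real.mul_rpow (by norm_num) hh.le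
  have hhp : 0 < h ^ (2*H) := Real.rpow_pos_of_pos hh _
  have hVpos : 0 < h^(2*H) - (2*h)^(2*H)/4 := by rw [hmulr]; nlinarith
  have hheq : h ^ (2*H) = s2 := by
    rw [hh_def, hs2_def, ← Real.rpow_natCast (2:ℝ) (m+1), ← Real.rpow_neg (by norm_num : (0:ℝ) ≤ 2),
      ← Real.rpow_mul (by norm_num : (0:ℝ) ≤ 2)]
    rw [hn_def]
    congr 1
    push_cast
    ring
  have hVle : h^(2*H) - (2*h)^(2*H)/4 ≤ s2 := by
    have : 0 ≤ (2*h)^(2*H)/4 := by positivity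
    linarith [hheq]
  -- union bound
  have hsub : {ω | x ≤ mdGap (B ω) (m+1)} ⊆
      ⋃ j ∈ Finset.range (2^m), {ω | x ≤ |B ω ((j:ℝ)/2^m + h) -
        (B ω ((j:ℝ)/2^m) + B ω ((j:ℝ)/2^m + 2*h))/2|} := by
    intro ω hω
    simp only [Set.mem_setOf_eq, mdGap, Finset.le_sup'_iff] at hω
    obtain ⟨j, hj, hle⟩ := hω
    simp only [Nat.add_sub_cancel, Finset.mem_range] at hj hle
    have hp0 : (2*(j:ℝ)+1)/2^(m+1) = (j:ℝ)/2^m + h := by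
      rw [hh_def]
      have : ((2:ℝ))^(m+1) = 2^m * 2 := by rw [pow_succ]
      rw [this]
      field_simp
    have hp2 : ((j:ℝ)+1)/2^m = (j:ℝ)/2^m + 2*h := by
      rw [hh_def]
      have : ((2:ℝ))^(m+1) = 2^m * 2 := by rw [pow_succ]
      rw [this]
      field_simp
    rw [hp0, hp2] at hle
    exact Set.mem_biUnion (Finset.mem_range.mpr hj) hle
  have hperj : ∀ j ∈ Finset.range (2^m),
      P {ω | x ≤ |B ω ((j:ℝ)/2^m + h) - (B ω ((j:ℝ)/2^m) + B ω ((j:ℝ)/2^m + 2*h))/2|} ≤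
        ENNReal.ofReal (2 * Real.exp (-x^2/(2*s2))) := by
    intro j hj
    rw [Finset.mem_range] at hj
    have h2m : (0:ℝ) < 2^m := by positivity
    refine per_j P H B hB hH0 _ h hh (by positivity) ?_ s2 x hs2 hVpos hVle hx0
    have hj' : (j:ℝ) + 1 ≤ 2^m := by exact_mod_cast hj
    have hp2 : (j:ℝ)/2^m + 2*h = ((j:ℝ)+1)/2^m := by
      rw [hh_def, pow_succ]
      field_simp
    rw [hp2, div_le_one h2m]
    linarith
  calc P {ω | x ≤ mdGap (B ω) (m+1)}
      ≤ P (⋃ j ∈ Finset.range (2^m), {ω | x ≤ |B ω ((j:ℝ)/2^m + h) -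
          (B ω ((j:ℝ)/2^m) + B ω ((j:ℝ)/2^m + 2*h))/2|}) := measure_mono hsub
    _ ≤ ∑ j ∈ Finset.range (2^m), P {ω | x ≤ |B ω ((j:ℝ)/2^m + h) -
          (B ω ((j:ℝ)/2^m) + B ω ((j:ℝ)/2^m + 2*h))/2|} := measure_biUnion_finset_le _ _
    _ ≤ ∑ _j ∈ Finset.range (2^m), ENNReal.ofReal (2 * Real.exp (-x^2/(2*s2))) :=
        Finset.sum_le_sum hperj
    _ = (2^m : ℕ) • ENNReal.ofReal (2 * Real.exp (-x^2/(2*s2))) := by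
        rw [Finset.sum_const, Finset.card_range]
    _ = ENNReal.ofReal (((2^m : ℕ):ℝ) * (2 * Real.exp (-x^2/(2*s2)))) := by
        rw [nsmul_eq_mul, ← ENNReal.ofReal_natCast (2^m), ← ENNReal.ofReal_mul (by positivity)]
    _ ≤ ENNReal.ofReal (2 * Real.exp (-ν' ^ 2 * (2:ℝ) ^ (2 * n * δ - 2))) := by
        apply ENNReal.ofReal_le_ofReal
        -- the core numeric inequality
        set E : ℝ := (2:ℝ) ^ (2 * δ * n) with hE_def
        have hEpos : 0 < E := Real.rpow_pos_of_pos two_pos _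
        have hxx : x^2/(2*s2) = 2*(ν+ν')^2*E := by
          have hkey : (2:ℝ)^(-(H-δ)*n) * (2:ℝ)^(-(H-δ)*n) / (2:ℝ)^(-(2*H)*n) = E := by
            rw [← Real.rpow_add two_pos, ← Real.rpow_sub two_pos, hE_def]
            congr 1
            ring
          calc x^2/(2*s2) = ρ^2/2 * ((2:ℝ)^(-(H-δ)*n) * (2:ℝ)^(-(H-δ)*n) / (2:ℝ)^(-(2*H)*n)) := by
                rw [hx_def, hs2_def]
                have hne : ((2:ℝ))^(-(2*H)*n) ≠ 0 := (Real.rpow_pos_of_pos two_pos _).ne'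
                field_simp
            _ = 2*(ν+ν')^2*E := by rw [hkey, hρ]; ring
        have hE4 : (2:ℝ) ^ (2 * n * δ - 2) = E/4 := by
          rw [Real.rpow_sub two_pos, hE_def]
          have h22 : (2:ℝ) ^ (2:ℝ) = 4 := by
            have := Real.rpow_natCast (2:ℝ) 2
            norm_num at this
            linarith [this]
          rw [h22]
          congr 2
          ring
        have hsq : 16 * n ≤ ν^2 * E := by
          have hs := mul_self_le_mul_self (by positivity) hKP
          have hsq1 : Real.sqrt n * Real.sqrt n = n :=
            Real.mul_self_sqrt (by linarith : (0:ℝ) ≤ n)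
          have hsq2 : (2:ℝ)^(δ*n) * (2:ℝ)^(δ*n) = E := by
            rw [← Real.rpow_add two_pos, hE_def]
            congr 1
            ring
          nlinarith [hs, hsq1, hsq2]
        have hpow : ((2:ℝ)^m : ℝ) ≤ Real.exp n := by
          have he1 : (2:ℝ) ≤ Real.exp 1 := by
            have := Real.add_one_le_exp 1
            linarith
          calc ((2:ℝ)^m : ℝ) ≤ (2:ℝ)^(m+1) := by
                apply pow_le_pow_right₀ (by norm_num) (by omega)
            _ ≤ (Real.exp 1)^(m+1) := pow_le_pow_left₀ (by norm_num) he1 _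
            _ = Real.exp n := by
                rw [← Real.exp_nat_mul, hn_def]
                norm_num
        rw [neg_div, hxx, hE4]
        have hfinal : ((2^m : ℕ):ℝ) * Real.exp (-(2*(ν+ν')^2*E)) ≤ Real.exp (-ν'^2 * (E/4)) := by
          have hc1 : ((2^m : ℕ):ℝ) = (2:ℝ)^m := by push_cast; ring
          rw [hc1]
          have hstep : (2:ℝ)^m * Real.exp (-(2*(ν+ν')^2*E)) ≤
              Real.exp n * Real.exp (-(2*(ν+ν')^2*E)) := by
            apply mul_le_mul_of_nonneg_right hpow (Real.exp_nonneg _)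
          rw [← Real.exp_add] at hstep
          refine hstep.trans (Real.exp_le_exp.mpr ?_)
          nlinarith [mul_pos (mul_pos hν hν') hEpos, mul_nonneg (sq_nonneg ν) hEpos.le,
            mul_nonneg (sq_nonneg ν') hEpos.le]
        calc ((2^m : ℕ):ℝ) * (2 * Real.exp (-(2*(ν+ν')^2*E))) =
              2 * (((2^m : ℕ):ℝ) * Real.exp (-(2*(ν+ν')^2*E))) := by ring
          _ ≤ 2 * Real.exp (-ν'^2 * (E/4)) := by linarith [hfinal]

end
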